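/- Let g(P) = (1 − √(1 − (1 − P/2)⁴))/(1 − P/2)⁴ for 0 ≤ P < 2. Then g is well-defined, satisfies 1/2 ≤ g(P) ≤ 1 with g(0) = 1, and for σ²_X > 0 and any D with 2σ²_X(1 − g(P)) ≤ D ≤ 2σ²_X g(P), setting a = g(P) − D/(2σ²_X) and σ²_X̂ = D + (2a − 1)σ²_X, the squared Hellinger perception constraint holds with equality: 1 − √(2σ_X σ_X̂/(σ²_X + σ²_X̂)) = P/2, i.e., H²(N(0,σ²_X), N(0,σ²_X̂)) = P. -/

import Mathlib

set_option maxHeartbeats 800000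


/-- Case III of the scalar Gaussian RDPF under MSE distortion and squared Hellinger
perception: with `g(P) = (1 − √(1 − (1 − P/2)⁴))/(1 − P/2)⁴` for `0 ≤ P < 2`, one has
`1/2 ≤ g(P) ≤ 1`, `g(0) = 1`, and for `σX² > 0` and `2σX²(1 − g(P)) ≤ D ≤ 2σX² g(P)`,
setting `a = g(P) − D/(2σX²)` and `σX̂² = D + (2a − 1)σX²`, the Hellinger perception
constraint holds with equality:
`1 − √(2 σX σX̂ / (σX² + σX̂²)) = P/2`, i.e. `H²(N(0,σX²), N(0,σX̂²)) = P`. -/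
theorem scalar_gaussian_rdpf_hellinger_caseIII (σX D P : ℝ)
    (hσ : 0 < σX) (hP0 : 0 ≤ P) (hP2 : P < 2)
    (hD_lo : 2 * σX ^ 2 *
        (1 - (1 - Real.sqrt (1 - (1 - P / 2) ^ 4)) / (1 - P / 2) ^ 4) ≤ D)
    (hD_hi : D ≤ 2 * σX ^ 2 *
        ((1 - Real.sqrt (1 - (1 - P / 2) ^ 4)) / (1 - P / 2) ^ 4)) :
    let g : ℝ → ℝ := fun Q => (1 - Real.sqrt (1 - (1 - Q / 2) ^ 4)) / (1 - Q / 2) ^ 4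
    let a : ℝ := g P - D / (2 * σX ^ 2)
    let σXh2 : ℝ := D + (2 * a - 1) * σX ^ 2
    (1 / 2 ≤ g P ∧ g P ≤ 1) ∧ g 0 = 1 ∧
    1 - Real.sqrt (2 * σX * Real.sqrt σXh2 / (σX ^ 2 + σXh2)) = P / 2 := by
  intro g a σXh2
  set u : ℝ := 1 - P / 2 with hu
  have hu0 : 0 < u := by simp [hu]; linarith
  have hu1 : u ≤ 1 := by simp [hu]; linarith
  set c : ℝ := u ^ 4 with hc
  have hc0 : 0 < c := by positivity
  have hc1 : c ≤ 1 := by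
    calc c ≤ 1 ^ 4 := by exact pow_le_pow_left₀ hu0.le hu1 4
    _ = 1 := by norm_num
  set t : ℝ := Real.sqrt (1 - c) with htdef
  have ht0 : 0 ≤ t := Real.sqrt_nonneg _
  have ht2 : t ^ 2 = 1 - c := Real.sq_sqrt (by linarith)
  have ht1 : t < 1 := by nlinarith
  -- g P = 1 / (1 + t)
  have hgP : g P = 1 / (1 + t) := by
    show (1 - t) / c = 1 / (1 + t)
    have hcfac : c = (1 - t) * (1 + t) := by nlinarith
    rw [hcfac]
    rw [div_eq_div_iff (by nlinarith) (by nlinarith)]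
    ring
  have hgb : 1 / 2 ≤ g P ∧ g P ≤ 1 := by
    constructor
    · rw [hgP, div_le_div_iff₀ (by norm_num) (by nlinarith)]
      nlinarith
    · rw [hgP, div_le_one (by nlinarith)]
      linarith
  refine ⟨hgb, ?_, ?_⟩
  · show (1 - Real.sqrt (1 - (1 - (0:ℝ) / 2) ^ 4)) / (1 - (0:ℝ) / 2) ^ 4 = 1
    norm_num
  -- main identity
  have hσ2 : (0:ℝ) < σX ^ 2 := by positivity
  set s : ℝ := 2 * g P - 1 with hs
  have hXh : σXh2 = s * σX ^ 2 := by
    show D + (2 * (g P - D / (2 * σX ^ 2)) - 1) * σX ^ 2 = s * σX ^ 2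
    field_simp [hs]
    ring
  have hsval : s = (1 - t) / (1 + t) := by
    rw [hs, hgP]
    rw [eq_div_iff (by nlinarith)]
    field_simp
    ring
  have hs0 : 0 ≤ s := by
    rw [hsval]
    apply div_nonneg <;> nlinarith
  have hsqrtXh : Real.sqrt σXh2 = Real.sqrt s * σX := by
    rw [hXh, Real.sqrt_mul hs0, Real.sqrt_sq hσ.le]
  -- The inner ratio equals √s * (1 + t)
  have hgPpos : 0 < g P := by linarith [hgb.1]
  have hratio : 2 * σX * Real.sqrt σXh2 / (σX ^ 2 + σXh2) = Real.sqrt s * (1 + t) := by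
    rw [hsqrtXh, hXh]
    have h1s : σX ^ 2 + s * σX ^ 2 = (1 + s) * σX ^ 2 := by ring
    rw [h1s]
    have h1spos : 0 < 1 + s := by linarith
    have : 1 + s = 2 / (1 + t) := by
      rw [hs, hgP]; ring
    rw [this]
    rw [div_eq_iff (by positivity)]
    field_simp
  rw [hratio]
  -- √s * (1 + t) = u ^ 2
  have hX : Real.sqrt s * (1 + t) = u ^ 2 := by
    have hXnn : 0 ≤ Real.sqrt s * (1 + t) :=
      mul_nonneg (Real.sqrt_nonneg s) (by linarith)
    have hsq : (Real.sqrt s * (1 + t)) ^ 2 = (u ^ 2) ^ 2 := by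
      have hss : (Real.sqrt s) ^ 2 = s := Real.sq_sqrt hs0
      have hexp : (Real.sqrt s * (1 + t)) ^ 2 = s * (1 + t) ^ 2 := by
        rw [mul_pow, hss]
      have h1t : (1:ℝ) + t ≠ 0 := by linarith
      rw [hexp, hsval, div_mul_eq_mul_div, div_eq_iff h1t]
      nlinarith
    calc Real.sqrt s * (1 + t) = Real.sqrt ((Real.sqrt s * (1 + t)) ^ 2) :=
          (Real.sqrt_sq hXnn).symm
      _ = Real.sqrt ((u ^ 2) ^ 2) := by rw [hsq]
      _ = u ^ 2 := Real.sqrt_sq (sq_nonneg u)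
  rw [hX, Real.sqrt_sq hu0.le]
  linarith
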